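/- For every real number t with 0 < t < 2, there exists at most one real number x in the open interval (0, π/4) satisfying (2·sin(x)·cos(2x)) / (1 + 2·sin(x)·sin(2x)) = tan(t·x). -/

import Mathlib

open Real

/-- The function `G(u) = arctan((2 sin u + sin 2u) / cos 2u)`.
On `(0, π/4)`, the original equation is equivalent to `(t+2) u = G u`. -/
noncomputable def Gfun (u : ℝ) : ℝ :=
  Real.arctan ((2 * Real.sin u + Real.sin (2*u)) / Real.cos (2*u))

/-- The derivative of `Gfun`, expressed in terms of `c = cos u`. -/
noncomputable def Gd (u : ℝ) : ℝ :=
  (2 + 6*Real.cos u - 4*Real.cos u^3) /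
    (5 + 8*Real.cos u - 4*Real.cos u^2 - 8*Real.cos u^3)

lemma hasDerivAt_Gfun (u : ℝ) (hu : u ∈ Set.Ioo 0 (π/4)) :
    HasDerivAt Gfun (Gd u) u := by
  obtain ⟨hu0, hu4⟩ := hu
  have hπ : 0 < π := pi_pos
  have hc2 : 0 < Real.cos (2*u) :=
    Real.cos_pos_of_mem_Ioo ⟨by linarith, by linarith⟩
  have h2u : HasDerivAt (fun v : ℝ => 2*v) 2 u := by
    simpa using (hasDerivAt_id u).const_mul (2:ℝ)
  have hsin2 : HasDerivAt (fun v => Real.sin (2*v)) (Real.cos (2*u) * 2) u :=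
    (Real.hasDerivAt_sin (2*u)).comp u h2u
  have hcos2 : HasDerivAt (fun v => Real.cos (2*v)) (-Real.sin (2*u) * 2) u :=
    (Real.hasDerivAt_cos (2*u)).comp u h2u
  have hn : HasDerivAt (fun v => 2 * Real.sin v + Real.sin (2*v))
      (2 * Real.cos u + Real.cos (2*u) * 2) u :=
    ((Real.hasDerivAt_sin u).const_mul 2).add hsin2
  have hψ := hn.div hcos2 hc2.ne'
  have hG := hψ.arctan
  convert hG using 1
  case e'_8 => rfl
  simp only [Pi.div_apply]
  -- algebra: show Gd u equals the computed derivative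
  have hc1 : 1/2 < Real.cos u := by
    have := Real.cos_pi_div_four
    have h := Real.cos_lt_cos_of_nonneg_of_le_pi (le_of_lt hu0) (by linarith) hu4
    nlinarith [Real.sq_sqrt (by norm_num : (2:ℝ) ≥ 0), Real.sqrt_nonneg 2]
  have hcle : Real.cos u ≤ 1 := Real.cos_le_one u
  have hs : Real.sin u ^ 2 = 1 - Real.cos u ^ 2 := Real.sin_sq u
  rw [Real.sin_two_mul, Real.cos_two_mul] at *
  set s := Real.sin u
  set c := Real.cos u
  have hD : (0:ℝ) < 5 + 8*c - 4*c^2 - 8*c^3 := by nlinarith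
  have hcc : (0:ℝ) < 2*c^2 - 1 := by linarith [hc2]
  have hden : (0:ℝ) < 1 + ((2*s + 2*s*c)/(2*c^2-1))^2 := by positivity
  have hrw : Gd u = (2 + 6*c - 4*c^3) / (5 + 8*c - 4*c^2 - 8*c^3) := rfl
  rw [hrw]
  have hD' := hD.ne'
  field_simp
  rw [div_eq_iff (ne_of_gt (by linarith : (0:ℝ) < 5 + c * 8 - c ^ 2 * 4 - c ^ 3 * 8))]
  linear_combination (4*(1+c)*(2 - 2*c - 10*c^2 + 4*c^3 + 12*c^4)) * hs

/-- Reduction: the original equation is equivalent to `(t+2) u = Gfun u`. -/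
lemma key_eq (t u : ℝ) (ht0 : 0 < t) (ht2 : t < 2) (hu : u ∈ Set.Ioo 0 (π/4))
    (he : (2 * Real.sin u * Real.cos (2*u)) / (1 + 2 * Real.sin u * Real.sin (2*u))
      = Real.tan (t*u)) :
    (t + 2) * u = Gfun u := by
  obtain ⟨hu0, hu4⟩ := hu
  have hπ : 0 < π := pi_pos
  have hsin : 0 < Real.sin u := Real.sin_pos_of_pos_of_lt_pi hu0 (by linarith)
  have hsin2 : 0 < Real.sin (2*u) := Real.sin_pos_of_pos_of_lt_pi (by linarith) (by linarith)
  have hcos2 : 0 < Real.cos (2*u) := Real.cos_pos_of_mem_Ioo ⟨by linarith, by linarith⟩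
  have hden : 0 < 1 + 2 * Real.sin u * Real.sin (2*u) := by nlinarith
  have hcost : 0 < Real.cos (t*u) := by
    apply Real.cos_pos_of_mem_Ioo
    constructor
    · nlinarith
    · nlinarith
  have step0 := (div_eq_iff hden.ne').mp he
  rw [Real.tan_eq_sin_div_cos] at step0
  have step1 : 2 * Real.sin u * Real.cos (2*u) * Real.cos (t*u)
      = Real.sin (t*u) * (1 + 2 * Real.sin u * Real.sin (2*u)) := by
    rw [div_mul_eq_mul_div, eq_div_iff hcost.ne'] at step0
    linarith [step0]
  have hsplit : (t+2)*u = t*u + 2*u := by ring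
  have key2 : Real.cos ((t+2)*u) * (2 * Real.sin u + Real.sin (2*u))
      = Real.sin ((t+2)*u) * Real.cos (2*u) := by
    rw [hsplit, Real.cos_add, Real.sin_add]
    linear_combination step1 - Real.sin (t*u) * (Real.sin_sq_add_cos_sq (2*u))
  have hsu0 : 0 < (t+2)*u := by nlinarith
  have hsupi : (t+2)*u < π := by nlinarith
  have hsinsu : 0 < Real.sin ((t+2)*u) := Real.sin_pos_of_pos_of_lt_pi hsu0 hsupi
  have hnum : 0 < 2 * Real.sin u + Real.sin (2*u) := by linarith
  have hcossu : 0 < Real.cos ((t+2)*u) := by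
    by_contra h
    push_neg at h
    nlinarith [mul_pos hsinsu hcos2]
  have hlt : (t+2)*u < π/2 := by
    by_contra h
    push_neg at h
    have := Real.cos_nonpos_of_pi_div_two_le_of_le h (by linarith)
    linarith
  have htan : Real.tan ((t+2)*u) = (2 * Real.sin u + Real.sin (2*u)) / Real.cos (2*u) := by
    rw [Real.tan_eq_sin_div_cos, div_eq_div_iff hcossu.ne' hcos2.ne']
    linear_combination -key2
  show (t + 2) * u = Real.arctan ((2 * Real.sin u + Real.sin (2*u)) / Real.cos (2*u))
  rw [← htan, Real.arctan_tan (by linarith) hlt]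

/-- Two solutions with `x < y` are impossible: `Gfun` is strictly concave with
`Gfun 0 = 0`, so `Gfun x / x` is strictly decreasing. -/
lemma aux_lt (t x y : ℝ) (hx : x ∈ Set.Ioo 0 (π/4)) (hy : y ∈ Set.Ioo 0 (π/4)) (hxy : x < y)
    (hGx : (t + 2) * x = Gfun x) (hGy : (t + 2) * y = Gfun y) : False := by
  obtain ⟨hx0, hx4⟩ := hx
  obtain ⟨hy0, hy4⟩ := hy
  have hπ : 0 < π := pi_pos
  have hcont : ContinuousOn Gfun (Set.Icc 0 y) := by
    apply Real.continuous_arctan.comp_continuousOn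
    apply ContinuousOn.div
    · fun_prop
    · fun_prop
    · intro u hu
      exact (Real.cos_pos_of_mem_Ioo ⟨by nlinarith [hu.1], by nlinarith [hu.2]⟩).ne'
  have hanti : StrictAntiOn (deriv Gfun) (Set.Ioo 0 y) := by
    intro a ha b hb hab
    have ha' : a ∈ Set.Ioo 0 (π/4) := ⟨ha.1, by linarith [ha.2]⟩
    have hb' : b ∈ Set.Ioo 0 (π/4) := ⟨hb.1, by linarith [hb.2]⟩
    rw [(hasDerivAt_Gfun a ha').deriv, (hasDerivAt_Gfun b hb').deriv]
    set A := Real.cos b with hAdef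
    set B := Real.cos a with hBdef
    have hAB : A < B :=
      Real.cos_lt_cos_of_nonneg_of_le_pi (le_of_lt ha'.1) (by linarith [hb'.2]) hab
    have hA0 : 0 < A := Real.cos_pos_of_mem_Ioo ⟨by linarith [hb'.1], by linarith [hb'.2]⟩
    have hB1 : B ≤ 1 := Real.cos_le_one a
    have hDA : (0:ℝ) < 5 + 8*A - 4*A^2 - 8*A^3 := by nlinarith
    have hDB : (0:ℝ) < 5 + 8*B - 4*B^2 - 8*B^3 := by nlinarith
    show Gd b < Gd a
    unfold Gd
    rw [← hAdef, ← hBdef, div_lt_div_iff₀ hDA hDB]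
    have hR : (0:ℝ) < 14 + 8*A - 4*A^2 + B*(8 + 20*A + 16*A^2)
        + B^2*(-4 + 16*A + 16*A^2) := by nlinarith
    nlinarith [mul_pos (sub_pos.2 hAB) hR]
  have hconc : StrictConcaveOn ℝ (Set.Icc 0 y) Gfun := by
    apply StrictAntiOn.strictConcaveOn_of_deriv (convex_Icc _ _) hcont
    rwa [interior_Icc]
  have h0mem : (0:ℝ) ∈ Set.Icc 0 y := ⟨le_refl _, le_of_lt hy0⟩
  have hymem : y ∈ Set.Icc 0 y := ⟨le_of_lt hy0, le_refl _⟩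
  have hane : (0:ℝ) ≠ y := ne_of_lt hy0
  have hb0 : 0 < x / y := div_pos hx0 hy0
  have ha0 : 0 < 1 - x / y := by
    have : x / y < 1 := (div_lt_one hy0).mpr hxy
    linarith
  have hsum : (1 - x/y) + x/y = 1 := by ring
  have hlt := hconc.2 h0mem hymem hane ha0 hb0 hsum
  have harg : (1 - x/y) • (0:ℝ) + (x/y) • y = x := by
    simp only [smul_eq_mul, mul_zero, zero_add]
    field_simp
  rw [harg] at hlt
  have hG0 : Gfun 0 = 0 := by simp [Gfun]
  rw [hG0, smul_eq_mul, smul_eq_mul, mul_zero, zero_add] at hlt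
  rw [← hGx, ← hGy] at hlt
  have : x / y * ((t+2)*y) = (t+2)*x := by field_simp
  rw [this] at hlt
  exact lt_irrefl _ hlt

/-- For `0 < t < 2`, the equation
`(2 sin x cos 2x) / (1 + 2 sin x sin 2x) = tan (t x)` has at most one solution
in the open interval `(0, π/4)`. -/
theorem at_most_one_root (t : ℝ) (ht0 : 0 < t) (ht2 : t < 2) (x y : ℝ)
    (hx : x ∈ Set.Ioo 0 (π / 4)) (hy : y ∈ Set.Ioo 0 (π / 4))
    (hex : (2 * Real.sin x * Real.cos (2 * x)) / (1 + 2 * Real.sin x * Real.sin (2 * x))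
      = Real.tan (t * x))
    (hey : (2 * Real.sin y * Real.cos (2 * y)) / (1 + 2 * Real.sin y * Real.sin (2 * y))
      = Real.tan (t * y)) :
    x = y := by
  have hGx := key_eq t x ht0 ht2 hx hex
  have hGy := key_eq t y ht0 ht2 hy hey
  rcases lt_trichotomy x y with h | h | h
  · exact absurd (aux_lt t x y hx hy h hGx hGy) (not_false)
  · exact h
  · exact absurd (aux_lt t y x hy hx h hGy hGx) (not_false)
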